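/- arXiv:2506.20556 — 3 statements merged into one kernel-verified Lean document; each statement's English description precedes it below -/
import Mathlib

section
/- For n ≥ 11, if ℱ is a maximum independent set of flags of type {1,n−3} of [n] such that every flag (A,B) ∈ ℱ satisfies 1 ∈ B, then |ℱ| ≤ C(n−1,3) + α(n−1), where α(n−1) denotes the maximum size of an independent set of flags of type {1,n−4} of [n−1]. -/
open Finset

/-- The ground set `[n] = {1,…,n}`. -/
def Iv (n : ℕ) : Finset ℕ := Finset.Icc 1 n

/-- A flag of type `{a,b}` of `[n]`: a pair `(A,B)` with `A ⊆ B ⊆ [n]`, `|A| = a`, `|B| = b`. -/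
def IsFlag (n a b : ℕ) (f : Finset ℕ × Finset ℕ) : Prop :=
  f.1 ⊆ f.2 ∧ f.2 ⊆ Iv n ∧ f.1.card = a ∧ f.2.card = b

/-- Opposition of flags `(A₁,B₁)`, `(A₂,B₂)`: `B₁ ∪ B₂ = [n]`, `A₁ ∩ B₂ = ∅`, `A₂ ∩ B₁ = ∅`. -/
def OppFlag (n : ℕ) (f g : Finset ℕ × Finset ℕ) : Prop :=
  f.2 ∪ g.2 = Iv n ∧ f.1 ∩ g.2 = ∅ ∧ g.1 ∩ f.2 = ∅

/-- An independent (EKR) set of flags: pairwise non-opposite. -/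
def Indep (n : ℕ) (F : Finset (Finset ℕ × Finset ℕ)) : Prop :=
  ∀ f ∈ F, ∀ g ∈ F, ¬ OppFlag n f g

/-- The `ℱ`-weight of a `b`-set `B`: the number of flags in `ℱ` with second component `B`. -/
def weightB (F : Finset (Finset ℕ × Finset ℕ)) (B : Finset ℕ) : ℕ :=
  (F.filter (fun f => f.2 = B)).card

/-- The `ℱ`-weight of an `a`-set `A`: the number of flags in `ℱ` with first component `A`. -/
def weightA (F : Finset (Finset ℕ × Finset ℕ)) (A : Finset ℕ) : ℕ :=
  (F.filter (fun f => f.1 = A)).card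

/-- A maximal independent set of flags of type `{a,b}`. -/
def MaximalIndep (n a b : ℕ) (F : Finset (Finset ℕ × Finset ℕ)) : Prop :=
  (∀ f ∈ F, IsFlag n a b f) ∧ Indep n F ∧
    (∀ f, IsFlag n a b f → Indep n (insert f F) → f ∈ F)

lemma shift_inj {s t : Finset ℕ} (hs : ∀ x ∈ s, 1 ≤ x) (ht : ∀ x ∈ t, 1 ≤ x)
    (h : s.image (· - 1) = t.image (· - 1)) : s = t := by
  ext x
  constructor
  · intro hx
    have hm : x - 1 ∈ t.image (· - 1) := h ▸ Finset.mem_image_of_mem _ hx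
    obtain ⟨y, hy, hxy⟩ := Finset.mem_image.mp hm
    have h1 := ht y hy
    have h2 := hs x hx
    have : y = x := by omega
    exact this ▸ hy
  · intro hx
    have hm : x - 1 ∈ s.image (· - 1) := h ▸ Finset.mem_image_of_mem _ hx
    obtain ⟨y, hy, hxy⟩ := Finset.mem_image.mp hm
    have h1 := hs y hy
    have h2 := ht x hx
    have : y = x := by omega
    exact this ▸ hy

/-- for `n ≥ 11`, if `ℱ` is a maximum independent set of flags of type
`{1,n−3}` of `[n]` in which every flag `(A,B)` satisfies `1 ∈ B`, then
`|ℱ| ≤ C(n−1,3) + α(n−1)`, where `α(n−1)` is the independence number for flags of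
type `{1,n−4}` of `[n−1]`. -/
theorem stmt_16 (n : ℕ) (hn : 11 ≤ n)
    (F : Finset (Finset ℕ × Finset ℕ)) (hflags : ∀ f ∈ F, IsFlag n 1 (n - 3) f)
    (hindep : Indep n F)
    (hmax : ∀ G : Finset (Finset ℕ × Finset ℕ),
      (∀ g ∈ G, IsFlag n 1 (n - 3) g) → Indep n G → G.card ≤ F.card)
    (h1 : ∀ f ∈ F, 1 ∈ f.2)
    (α : ℕ)
    (hα : IsGreatest {k : ℕ | ∃ G : Finset (Finset ℕ × Finset ℕ),
      (∀ g ∈ G, IsFlag (n - 1) 1 (n - 4) g) ∧ Indep (n - 1) G ∧ G.card = k} α) :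
    F.card ≤ Nat.choose (n - 1) 3 + α := by
  
  classical
  set F1 := F.filter (fun f => f.1 = {1}) with hF1
  set F2 := F.filter (fun f => ¬ f.1 = {1}) with hF2
  have hsplit : F1.card + F2.card = F.card := by
    rw [hF1, hF2]
    exact card_filter_add_card_filter_not _
  -- ## Bound on F1
  have hb1 : F1.card ≤ Nat.choose (n - 1) 3 := by
    have hle : F1.card ≤ ((Icc 2 n).powersetCard (n - 4)).card := by
      apply card_le_card_of_injOn (fun f => f.2.erase 1)
      · intro f hf
        rw [hF1, mem_coe, mem_filter] at hf
        obtain ⟨hsub, hsub2, hc1, hc2⟩ := hflags f hf.1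
        rw [mem_coe, mem_powersetCard]
        constructor
        · intro x hx
          rw [mem_erase] at hx
          have hxI := hsub2 hx.2
          rw [Iv, mem_Icc] at hxI
          rw [mem_Icc]; omega
        · rw [card_erase_of_mem (h1 f hf.1), hc2]
          omega
      · intro f hf g hg h
        have hf' : f ∈ F ∧ f.1 = {1} := mem_filter.mp (mem_coe.mp hf)
        have hg' : g ∈ F ∧ g.1 = {1} := mem_filter.mp (mem_coe.mp hg)
        have h2 : f.2 = g.2 := by
          have h' : f.2.erase 1 = g.2.erase 1 := h
          rw [← insert_erase (h1 f hf'.1), ← insert_erase (h1 g hg'.1), h']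
        exact Prod.ext (hf'.2.trans hg'.2.symm) h2
    rw [card_powersetCard, Nat.card_Icc] at hle
    have h3 : n + 1 - 2 = n - 1 := by omega
    rw [h3] at hle
    have h4 : (n - 1).choose (n - 4) = (n - 1).choose 3 := by
      have := Nat.choose_symm (n := n - 1) (k := 3) (by omega)
      have h5 : n - 1 - 3 = n - 4 := by omega
      rw [h5] at this
      exact this.symm ▸ rfl
    omega
  -- ## Bound on F2
  have hb2 : F2.card ≤ α := by
    set φ : Finset ℕ × Finset ℕ → Finset ℕ × Finset ℕ :=
      fun f => (f.1.image (· - 1), (f.2.erase 1).image (· - 1)) with hφ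
    -- members of F2 don't contain 1 in the first component
    have hne1 : ∀ f ∈ F2, 1 ∉ f.1 := by
      intro f hf h1f
      rw [hF2, mem_filter] at hf
      obtain ⟨a, ha⟩ := card_eq_one.mp (hflags f hf.1).2.2.1
      rw [ha, mem_singleton] at h1f
      exact hf.2 (by rw [ha, h1f])
    have hF2F : ∀ f ∈ F2, f ∈ F := fun f hf => (mem_filter.mp hf).1
    have hA2 : ∀ f ∈ F2, ∀ x ∈ f.1, 2 ≤ x ∧ x ≤ n := by
      intro f hf x hx
      obtain ⟨hsub, hsub2, _, _⟩ := hflags f (hF2F f hf)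
      have := hsub2 (hsub hx)
      rw [Iv, mem_Icc] at this
      have hx1 : x ≠ 1 := fun h => hne1 f hf (h ▸ hx)
      omega
    have hB2 : ∀ f ∈ F2, ∀ x ∈ f.2.erase 1, 2 ≤ x ∧ x ≤ n := by
      intro f hf x hx
      rw [mem_erase] at hx
      have := (hflags f (hF2F f hf)).2.1 hx.2
      rw [Iv, mem_Icc] at this
      omega
    set G := F2.image φ with hG
    have hGflag : ∀ g ∈ G, IsFlag (n - 1) 1 (n - 4) g := by
      intro g hg
      rw [hG, mem_image] at hg
      obtain ⟨f, hf, rfl⟩ := hg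
      obtain ⟨hsub, hsub2, hc1, hc2⟩ := hflags f (hF2F f hf)
      refine ⟨?_, ?_, ?_, ?_⟩
      · apply image_subset_image
        rw [subset_erase]
        exact ⟨hsub, hne1 f hf⟩
      · intro x hx
        rw [mem_image] at hx
        obtain ⟨y, hy, rfl⟩ := hx
        have := hB2 f hf y hy
        rw [Iv, mem_Icc]; omega
      · rw [card_image_of_injOn, hc1]
        intro x hx y hy hxy
        have := hA2 f hf x hx
        have := hA2 f hf y hy
        simp only at hxy
        omega
      · rw [card_image_of_injOn, card_erase_of_mem (h1 f (hF2F f hf)), hc2]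
        · omega
        · intro x hx y hy hxy
          have := hB2 f hf x hx
          have := hB2 f hf y hy
          simp only at hxy
          omega
    have hGindep : Indep (n - 1) G := by
      rintro g hg g' hg' hopp
      rw [hG, mem_image] at hg hg'
      obtain ⟨f, hf, rfl⟩ := hg
      obtain ⟨f', hf', rfl⟩ := hg'
      obtain ⟨hB, hA, hA'⟩ := hopp
      apply hindep f (hF2F f hf) f' (hF2F f' hf')
      refine ⟨?_, ?_, ?_⟩
      · apply Subset.antisymm
        · intro x hx
          rw [mem_union] at hx
          rcases hx with h | h
          · exact (hflags f (hF2F f hf)).2.1 h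
          · exact (hflags f' (hF2F f' hf')).2.1 h
        · intro x hx
          rw [Iv, mem_Icc] at hx
          by_cases hx1 : x = 1
          · exact mem_union_left _ (hx1 ▸ h1 f (hF2F f hf))
          · have hm : x - 1 ∈ Iv (n - 1) := by rw [Iv, mem_Icc]; omega
            rw [← hB] at hm
            simp only [hφ, mem_union, mem_image] at hm
            rcases hm with ⟨y, hy, hxy⟩ | ⟨y, hy, hxy⟩
            · have := hB2 f hf y hy
              have hyx : y = x := by omega
              exact mem_union_left _ (mem_of_mem_erase (hyx ▸ hy))
            · have := hB2 f' hf' y hy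
              have hyx : y = x := by omega
              exact mem_union_right _ (mem_of_mem_erase (hyx ▸ hy))
      · rw [eq_empty_iff_forall_notMem]
        intro a ha
        rw [mem_inter] at ha
        have ha2 := hA2 f hf a ha.1
        have haE : a ∈ f'.2.erase 1 := mem_erase.mpr ⟨by omega, ha.2⟩
        have : a - 1 ∈ (f.1.image (· - 1)) ∩ ((f'.2.erase 1).image (· - 1)) :=
          mem_inter.mpr ⟨mem_image_of_mem _ ha.1, mem_image_of_mem _ haE⟩
        rw [show (f.1.image (· - 1)) = (φ f).1 from rfl] at this
        rw [show ((f'.2.erase 1).image (· - 1)) = (φ f').2 from rfl] at this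
        rw [hA] at this
        exact notMem_empty _ this
      · rw [eq_empty_iff_forall_notMem]
        intro a ha
        rw [mem_inter] at ha
        have ha2 := hA2 f' hf' a ha.1
        have haE : a ∈ f.2.erase 1 := mem_erase.mpr ⟨by omega, ha.2⟩
        have : a - 1 ∈ (f'.1.image (· - 1)) ∩ ((f.2.erase 1).image (· - 1)) :=
          mem_inter.mpr ⟨mem_image_of_mem _ ha.1, mem_image_of_mem _ haE⟩
        rw [show (f'.1.image (· - 1)) = (φ f').1 from rfl] at this
        rw [show ((f.2.erase 1).image (· - 1)) = (φ f).2 from rfl] at this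
        rw [hA'] at this
        exact notMem_empty _ this
    have hcard : G.card = F2.card := by
      rw [hG]
      apply card_image_of_injOn
      intro f hf g hg hfg
      have h1' : f.1 = g.1 := by
        apply shift_inj
        · intro x hx; have := hA2 f hf x hx; omega
        · intro x hx; have := hA2 g hg x hx; omega
        · exact congrArg Prod.fst hfg
      have h2' : f.2 = g.2 := by
        have he : f.2.erase 1 = g.2.erase 1 := by
          apply shift_inj
          · intro x hx; have := hB2 f hf x hx; omega
          · intro x hx; have := hB2 g hg x hx; omega
          · exact congrArg Prod.snd hfg
        rw [← insert_erase (h1 f (hF2F f hf)), ← insert_erase (h1 g (hF2F g hg)), he]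
      exact Prod.ext h1' h2'
    have : F2.card ∈ {k : ℕ | ∃ G : Finset (Finset ℕ × Finset ℕ),
        (∀ g ∈ G, IsFlag (n - 1) 1 (n - 4) g) ∧ Indep (n - 1) G ∧ G.card = k} :=
      ⟨G, hGflag, hGindep, hcard⟩
    exact hα.2 this
  omega
end

section
/- For n ≥ 9 and 0 ≤ i ≤ n−6, the family ℱ_i of flags (A,B) of type {1,n−3} of [n] satisfying ([i] ⊆ B and B ⊆ [n−1]) or (min(A) ≤ i and [min(A)] ⊆ B) is an independent set (pairwise non-opposite), and for i = n−9 it has size C(n,4) + 42. -/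
open Finset

instance (n a b : ℕ) : DecidablePred (IsFlag n a b) := fun f => by
  unfold IsFlag; infer_instance

instance (n : ℕ) (f g : Finset ℕ × Finset ℕ) : Decidable (OppFlag n f g) := by
  unfold OppFlag; infer_instance

/-- The finset of all flags of type `{a,b}` of `[n]`. -/
def allFlags (n a b : ℕ) : Finset (Finset ℕ × Finset ℕ) :=
  ((Iv n).powerset ×ˢ (Iv n).powerset).filter (IsFlag n a b)

/-- The family `ℱ_i(n,1,n−3)`: flags `(A,B)` of type `{1,n−3}` with
`[i] ⊆ B ⊆ [n−1]`, or `min(A) ≤ i` and `[min(A)] ⊆ B` (as `|A| = 1`, the latter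
is phrased via the unique element of `A`). -/
def Fi (n i : ℕ) : Finset (Finset ℕ × Finset ℕ) :=
  (allFlags n 1 (n - 3)).filter
    (fun f => (Iv i ⊆ f.2 ∧ f.2 ⊆ Iv (n - 1)) ∨ ∃ m ∈ f.1, m ≤ i ∧ Iv m ⊆ f.2)

-- auxiliary lemmas
lemma mem_Iv {x n : ℕ} : x ∈ Iv n ↔ 1 ≤ x ∧ x ≤ n := by simp [Iv]

lemma card_Iv (n : ℕ) : (Iv n).card = n := by simp [Iv]

lemma Iv_mono {m n : ℕ} (h : m ≤ n) : Iv m ⊆ Iv n :=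
  Finset.Icc_subset_Icc_right h

lemma mem_allFlags {n a b : ℕ} {f : Finset ℕ × Finset ℕ} :
    f ∈ allFlags n a b ↔ IsFlag n a b f := by
  constructor
  · intro h; exact (Finset.mem_filter.mp h).2
  · intro h
    refine Finset.mem_filter.mpr ⟨?_, h⟩
    refine Finset.mem_product.mpr ⟨?_, ?_⟩
    · exact Finset.mem_powerset.mpr (h.1.trans h.2.1)
    · exact Finset.mem_powerset.mpr h.2.1

lemma mem_Fi {n i : ℕ} {f : Finset ℕ × Finset ℕ} :
    f ∈ Fi n i ↔ IsFlag n 1 (n - 3) f ∧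
      ((Iv i ⊆ f.2 ∧ f.2 ⊆ Iv (n - 1)) ∨ ∃ m ∈ f.1, m ≤ i ∧ Iv m ⊆ f.2) := by
  rw [Fi, Finset.mem_filter, mem_allFlags]

lemma indep_Fi (n : ℕ) (hn : 1 ≤ n) (i : ℕ) : Indep n (Fi n i) := by
  intro f hf g hg hopp
  obtain ⟨hff, hfc⟩ := mem_Fi.mp hf
  obtain ⟨hgf, hgc⟩ := mem_Fi.mp hg
  obtain ⟨hU, h1, h2⟩ := hopp
  rcases hfc with ⟨hfi, hfB⟩ | ⟨m₁, hm₁A, hm₁i, hm₁B⟩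
  · rcases hgc with ⟨hgi, hgB⟩ | ⟨m₂, hm₂A, hm₂i, hm₂B⟩
    · have hnmem : n ∈ f.2 ∪ g.2 := by rw [hU]; exact mem_Iv.mpr ⟨hn, le_refl n⟩
      rcases Finset.mem_union.mp hnmem with h | h
      · have := (mem_Iv.mp (hfB h)).2; omega
      · have := (mem_Iv.mp (hgB h)).2; omega
    · -- m₂ ∈ g.1, m₂ ≤ i, so m₂ ∈ Iv i ⊆ f.2, but g.1 ∩ f.2 = ∅
      have hm₂1 : 1 ≤ m₂ := (mem_Iv.mp (hgf.2.1 (hgf.1 hm₂A))).1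
      have : m₂ ∈ g.1 ∩ f.2 := Finset.mem_inter.mpr ⟨hm₂A, hfi (mem_Iv.mpr ⟨hm₂1, hm₂i⟩)⟩
      rw [h2] at this; exact absurd this (Finset.notMem_empty _)
  · rcases hgc with ⟨hgi, hgB⟩ | ⟨m₂, hm₂A, hm₂i, hm₂B⟩
    · have hm₁1 : 1 ≤ m₁ := (mem_Iv.mp (hff.2.1 (hff.1 hm₁A))).1
      have : m₁ ∈ f.1 ∩ g.2 := Finset.mem_inter.mpr ⟨hm₁A, hgi (mem_Iv.mpr ⟨hm₁1, hm₁i⟩)⟩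
      rw [h1] at this; exact absurd this (Finset.notMem_empty _)
    · have hm₁1 : 1 ≤ m₁ := (mem_Iv.mp (hff.2.1 (hff.1 hm₁A))).1
      have hm₂1 : 1 ≤ m₂ := (mem_Iv.mp (hgf.2.1 (hgf.1 hm₂A))).1
      have ha : m₁ ∉ g.2 := by
        intro h
        have : m₁ ∈ f.1 ∩ g.2 := Finset.mem_inter.mpr ⟨hm₁A, h⟩
        rw [h1] at this; exact absurd this (Finset.notMem_empty _)
      have hb : m₂ ∉ f.2 := by
        intro h
        have : m₂ ∈ g.1 ∩ f.2 := Finset.mem_inter.mpr ⟨hm₂A, h⟩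
        rw [h2] at this; exact absurd this (Finset.notMem_empty _)
      have hab : ¬ (m₁ ≤ m₂) := fun h => ha (hm₂B (mem_Iv.mpr ⟨hm₁1, h⟩))
      have hba : ¬ (m₂ ≤ m₁) := fun h => hb (hm₁B (mem_Iv.mpr ⟨hm₂1, h⟩))
      omega

def Cls1 (n : ℕ) : Finset (Finset ℕ × Finset ℕ) :=
  (allFlags n 1 (n - 3)).filter (fun f => ∃ m ∈ f.1, m ≤ n - 9 ∧ Iv m ⊆ f.2)

def T1 (n : ℕ) : Finset (Finset ℕ) :=
  ((Iv n).powersetCard 4).filter (fun D => ∃ x ∈ D, x ≤ n - 9)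

lemma mem_T1 {n : ℕ} {D : Finset ℕ} :
    D ∈ T1 n ↔ (D ⊆ Iv n ∧ D.card = 4) ∧ ∃ x ∈ D, x ≤ n - 9 := by
  rw [T1, Finset.mem_filter, Finset.mem_powersetCard]

lemma T1_nonempty {n : ℕ} {D : Finset ℕ} (hD : D ∈ T1 n) : D.Nonempty := by
  rw [← Finset.card_pos, (mem_T1.mp hD).1.2]; norm_num

lemma card_Cls1_aux {n : ℕ} (hn : 9 ≤ n) : (Cls1 n).card = (T1 n).card := by
  have memC : ∀ f, f ∈ Cls1 n ↔ IsFlag n 1 (n - 3) f ∧ ∃ m ∈ f.1, m ≤ n - 9 ∧ Iv m ⊆ f.2 := by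
    intro f; rw [Cls1, Finset.mem_filter, mem_allFlags]
  refine Finset.card_bij' (fun f _ => f.1 ∪ (Iv n \ f.2))
    (fun D hD => ({D.min' (T1_nonempty hD)}, Iv n \ (D.erase (D.min' (T1_nonempty hD))))) ?_ ?_ ?_ ?_
  · -- hi
    intro f hf
    obtain ⟨⟨hAB, hBn, hA1, hB⟩, m, hmA, hmle, hmB⟩ := (memC f).mp hf
    obtain ⟨a, hA⟩ := Finset.card_eq_one.mp hA1
    rw [hA, Finset.mem_singleton] at hmA; subst hmA
    have haB : m ∈ f.2 := hAB (by rw [hA]; exact Finset.mem_singleton_self m)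
    rw [mem_T1]
    refine ⟨⟨?_, ?_⟩, m, ?_, hmle⟩
    · exact Finset.union_subset (hAB.trans hBn) (Finset.sdiff_subset)
    · rw [hA]
      rw [← Finset.insert_eq, Finset.card_insert_of_notMem (by simp [haB])]
      rw [Finset.card_sdiff_of_subset hBn, card_Iv, hB]
      omega
    · exact Finset.mem_union_left _ (by rw [hA]; exact Finset.mem_singleton_self m)
  · -- hj
    intro D hD
    obtain ⟨⟨hDn, hD4⟩, x, hxD, hxle⟩ := mem_T1.mp hD
    set a := D.min' (T1_nonempty hD) with ha
    have haD : a ∈ D := Finset.min'_mem _ _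
    have hale : a ≤ n - 9 := le_trans (Finset.min'_le _ _ hxD) hxle
    have han : a ∈ Iv n := hDn haD
    rw [memC]
    refine ⟨⟨?_, Finset.sdiff_subset, rfl, ?_⟩, a, Finset.mem_singleton_self a, hale, ?_⟩
    · intro y hy
      rw [Finset.mem_singleton] at hy; subst hy
      exact Finset.mem_sdiff.mpr ⟨han, by simp⟩
    · rw [Finset.card_sdiff_of_subset ((Finset.erase_subset _ _).trans hDn), card_Iv,
        Finset.card_erase_of_mem haD, hD4]
    · intro y hy
      obtain ⟨hy1, hy2⟩ := mem_Iv.mp hy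
      refine Finset.mem_sdiff.mpr ⟨mem_Iv.mpr ⟨hy1, le_trans hy2 ((mem_Iv.mp han).2)⟩, ?_⟩
      intro hcon
      obtain ⟨hne, hyD⟩ := Finset.mem_erase.mp hcon
      exact hne (le_antisymm hy2 (Finset.min'_le _ _ hyD))
  · -- left inverse
    intro f hf
    obtain ⟨⟨hAB, hBn, hA1, hB⟩, m, hmA, hmle, hmB⟩ := (memC f).mp hf
    obtain ⟨a, hA⟩ := Finset.card_eq_one.mp hA1
    rw [hA, Finset.mem_singleton] at hmA; subst hmA
    have haB : m ∈ f.2 := hAB (by rw [hA]; exact Finset.mem_singleton_self m)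
    have hmin : ∀ hne, (f.1 ∪ (Iv n \ f.2)).min' hne = m := by
      intro hne
      apply le_antisymm
      · exact Finset.min'_le _ _ (Finset.mem_union_left _ (by rw [hA]; exact Finset.mem_singleton_self m))
      · apply Finset.le_min'
        intro y hy
        rcases Finset.mem_union.mp hy with h | h
        · rw [hA, Finset.mem_singleton] at h; omega
        · obtain ⟨hy1, hy2⟩ := Finset.mem_sdiff.mp h
          by_contra hcon
          exact hy2 (hmB (mem_Iv.mpr ⟨(mem_Iv.mp hy1).1, by omega⟩))
    rw [hmin]
    have herase : (f.1 ∪ (Iv n \ f.2)).erase m = Iv n \ f.2 := by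
      ext y
      simp only [Finset.mem_erase, Finset.mem_union, Finset.mem_sdiff, hA, Finset.mem_singleton]
      constructor
      · rintro ⟨hne, h | h⟩
        · omega
        · exact h
      · intro h
        exact ⟨fun hc => h.2 (hc ▸ haB), Or.inr h⟩
    rw [herase, Finset.sdiff_sdiff_eq_self hBn, ← hA]
  · -- right inverse
    intro D hD
    obtain ⟨⟨hDn, hD4⟩, x, hxD, hxle⟩ := mem_T1.mp hD
    set a := D.min' (T1_nonempty hD) with ha
    have haD : a ∈ D := Finset.min'_mem _ _
    dsimp only
    rw [Finset.sdiff_sdiff_eq_self ((Finset.erase_subset _ _).trans hDn),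
      ← Finset.insert_eq, Finset.insert_erase haD]

lemma card_T1 {n : ℕ} (hn : 9 ≤ n) : (T1 n).card + 126 = n.choose 4 := by
  have key := Finset.card_filter_add_card_filter_not
    (s := (Iv n).powersetCard 4) (p := fun D => ∃ x ∈ D, x ≤ n - 9)
  have hneg : ((Iv n).powersetCard 4).filter (fun D => ¬ ∃ x ∈ D, x ≤ n - 9)
      = (Finset.Icc (n - 8) n).powersetCard 4 := by
    ext D
    simp only [Finset.mem_filter, Finset.mem_powersetCard, not_exists, not_and]
    constructor
    · rintro ⟨⟨hDn, hD4⟩, hall⟩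
      refine ⟨fun x hx => ?_, hD4⟩
      obtain ⟨h1, h2⟩ := mem_Iv.mp (hDn hx)
      have := hall x hx
      exact Finset.mem_Icc.mpr ⟨by omega, h2⟩
    · rintro ⟨hD, hD4⟩
      refine ⟨⟨fun x hx => ?_, hD4⟩, fun x hx => ?_⟩
      · obtain ⟨h1, h2⟩ := Finset.mem_Icc.mp (hD hx)
        exact mem_Iv.mpr ⟨by omega, h2⟩
      · obtain ⟨h1, h2⟩ := Finset.mem_Icc.mp (hD hx)
        omega
  rw [hneg] at key
  rw [Finset.card_powersetCard, Nat.card_Icc] at key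
  rw [Finset.card_powersetCard, card_Iv] at key
  have h9 : n + 1 - (n - 8) = 9 := by omega
  rw [h9] at key
  have : Nat.choose 9 4 = 126 := by decide
  rw [this] at key
  exact key

-- now Class 2
def Cls2 (n : ℕ) : Finset (Finset ℕ × Finset ℕ) :=
  (allFlags n 1 (n - 3)).filter
    (fun f => (Iv (n - 9) ⊆ f.2 ∧ f.2 ⊆ Iv (n - 1)) ∧ ∀ m ∈ f.1, n - 8 ≤ m)

def Bset (n : ℕ) : Finset (Finset ℕ) :=
  ((Iv (n - 1)).powersetCard (n - 3)).filter (fun B => Iv (n - 9) ⊆ B)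

lemma mem_Bset {n : ℕ} {B : Finset ℕ} :
    B ∈ Bset n ↔ (B ⊆ Iv (n - 1) ∧ B.card = n - 3) ∧ Iv (n - 9) ⊆ B := by
  rw [Bset, Finset.mem_filter, Finset.mem_powersetCard]

lemma card_Bset {n : ℕ} (hn : 9 ≤ n) : (Bset n).card = 28 := by
  have : (Bset n).card = ((Finset.Icc (n - 8) (n - 1)).powersetCard 2).card := by
    refine Finset.card_nbij' (fun B => Iv (n - 1) \ B) (fun E => Iv (n - 1) \ E) ?_ ?_ ?_ ?_
    · intro B hB
      obtain ⟨⟨hBn, hBc⟩, hIB⟩ := mem_Bset.mp hB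
      rw [Finset.mem_coe, Finset.mem_powersetCard]
      constructor
      · intro x hx
        obtain ⟨hx1, hx2⟩ := Finset.mem_sdiff.mp hx
        obtain ⟨h1, h2⟩ := mem_Iv.mp hx1
        have : ¬ (1 ≤ x ∧ x ≤ n - 9) := fun hc => hx2 (hIB (mem_Iv.mpr hc))
        exact Finset.mem_Icc.mpr ⟨by omega, h2⟩
      · rw [Finset.card_sdiff_of_subset hBn, card_Iv, hBc]; omega
    · intro E hE
      obtain ⟨hEs, hEc⟩ := Finset.mem_powersetCard.mp hE
      have hEn : E ⊆ Iv (n - 1) := fun x hx => by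
        obtain ⟨h1, h2⟩ := Finset.mem_Icc.mp (hEs hx)
        exact mem_Iv.mpr ⟨by omega, h2⟩
      rw [Finset.mem_coe, mem_Bset]
      refine ⟨⟨Finset.sdiff_subset, ?_⟩, ?_⟩
      · rw [Finset.card_sdiff_of_subset hEn, card_Iv, hEc]; omega
      · intro y hy
        obtain ⟨h1, h2⟩ := mem_Iv.mp hy
        refine Finset.mem_sdiff.mpr ⟨mem_Iv.mpr ⟨h1, by omega⟩, fun hc => ?_⟩
        obtain ⟨h3, h4⟩ := Finset.mem_Icc.mp (hEs hc)
        omega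
    · intro B hB
      exact Finset.sdiff_sdiff_eq_self (mem_Bset.mp hB).1.1
    · intro E hE
      refine Finset.sdiff_sdiff_eq_self (fun x hx => ?_)
      obtain ⟨h1, h2⟩ := Finset.mem_Icc.mp ((Finset.mem_powersetCard.mp hE).1 hx)
      exact mem_Iv.mpr ⟨by omega, h2⟩
  rw [this, Finset.card_powersetCard, Nat.card_Icc]
  have h8 : n - 1 + 1 - (n - 8) = 8 := by omega
  rw [h8]
  decide

lemma mem_Cls2 {n : ℕ} {f : Finset ℕ × Finset ℕ} :
    f ∈ Cls2 n ↔ IsFlag n 1 (n - 3) f ∧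
      ((Iv (n - 9) ⊆ f.2 ∧ f.2 ⊆ Iv (n - 1)) ∧ ∀ m ∈ f.1, n - 8 ≤ m) := by
  rw [Cls2, Finset.mem_filter, mem_allFlags]

lemma fiber_nonempty {n : ℕ} {B : Finset ℕ} {f : Finset ℕ × Finset ℕ}
    (hf : f ∈ (Cls2 n).filter (fun f => f.2 = B)) : f.1.Nonempty := by
  rw [← Finset.card_pos, (mem_Cls2.mp (Finset.mem_filter.mp hf).1).1.2.2.1]
  norm_num

lemma fiber_card {n : ℕ} (hn : 9 ≤ n) {B : Finset ℕ} (hB : B ∈ Bset n) :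
    ((Cls2 n).filter (fun f => f.2 = B)).card = 6 := by
  obtain ⟨⟨hBn, hBc⟩, hIB⟩ := mem_Bset.mp hB
  have key : ((Cls2 n).filter (fun f => f.2 = B)).card = (B \ Iv (n - 9)).card := by
    refine Finset.card_bij' (fun f hf => f.1.min' (fiber_nonempty hf))
      (fun a _ => ({a}, B)) ?_ ?_ ?_ ?_
    · intro f hf
      obtain ⟨hf2, hfB⟩ := Finset.mem_filter.mp hf
      obtain ⟨⟨hAB, hBn', hA1, hBc'⟩, ⟨hI, hup⟩, hall⟩ := mem_Cls2.mp hf2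
      obtain ⟨a, hA⟩ := Finset.card_eq_one.mp hA1
      have hma : ∀ h, f.1.min' h = a := fun h =>
        Finset.mem_singleton.mp (by rw [← hA]; exact Finset.min'_mem f.1 h)
      rw [hma]
      have haB : a ∈ B := hfB ▸ hAB (by rw [hA]; exact Finset.mem_singleton_self a)
      have hge : n - 8 ≤ a := hall a (by rw [hA]; exact Finset.mem_singleton_self a)
      refine Finset.mem_sdiff.mpr ⟨haB, fun hc => ?_⟩
      obtain ⟨h1, h2⟩ := mem_Iv.mp hc
      omega
    · intro a ha
      obtain ⟨haB, haI⟩ := Finset.mem_sdiff.mp ha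
      have ha1 : 1 ≤ a := (mem_Iv.mp (hBn haB)).1
      have hage : n - 8 ≤ a := by
        by_contra hc
        exact haI (mem_Iv.mpr ⟨ha1, by omega⟩)
      refine Finset.mem_filter.mpr ⟨mem_Cls2.mpr ⟨⟨?_, ?_, rfl, hBc⟩, ⟨hIB, hBn⟩, ?_⟩, rfl⟩
      · intro y hy; rw [Finset.mem_singleton] at hy; subst hy; exact haB
      · exact hBn.trans (Iv_mono (by omega))
      · intro m hm; rw [Finset.mem_singleton] at hm; omega
    · intro f hf
      obtain ⟨hf2, hfB⟩ := Finset.mem_filter.mp hf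
      obtain ⟨⟨hAB, hBn', hA1, hBc'⟩, -, -⟩ := mem_Cls2.mp hf2
      obtain ⟨a, hA⟩ := Finset.card_eq_one.mp hA1
      have hma : ∀ h, f.1.min' h = a := fun h =>
        Finset.mem_singleton.mp (by rw [← hA]; exact Finset.min'_mem f.1 h)
      rw [hma, ← hA, ← hfB]
    · intro a ha
      exact Finset.min'_singleton a
  rw [key, Finset.card_sdiff_of_subset hIB, card_Iv, hBc]
  omega

lemma card_Cls2 {n : ℕ} (hn : 9 ≤ n) : (Cls2 n).card = 168 := by
  have hmem : ∀ f ∈ Cls2 n, f.2 ∈ Bset n := by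
    intro f hf
    obtain ⟨⟨hAB, hBn, hA1, hBc⟩, ⟨hI, hup⟩, -⟩ := mem_Cls2.mp hf
    exact mem_Bset.mpr ⟨⟨hup, hBc⟩, hI⟩
  rw [Finset.card_eq_sum_card_fiberwise hmem]
  rw [Finset.sum_congr rfl (fun B hB => fiber_card hn hB)]
  rw [Finset.sum_const, card_Bset hn, smul_eq_mul]

lemma Fi_eq_union {n : ℕ} (hn : 9 ≤ n) : Fi n (n - 9) = Cls1 n ∪ Cls2 n := by
  rw [Fi, Cls1, Cls2, ← Finset.filter_or]
  apply Finset.filter_congr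
  intro f hf
  have hflag := mem_allFlags.mp hf
  obtain ⟨a, hA⟩ := Finset.card_eq_one.mp hflag.2.2.1
  constructor
  · rintro (⟨h1, h2⟩ | h)
    · by_cases ha : a ≤ n - 9
      · exact Or.inl ⟨a, by simp [hA], ha, (Iv_mono ha).trans h1⟩
      · refine Or.inr ⟨⟨h1, h2⟩, fun m hm => ?_⟩
        rw [hA, Finset.mem_singleton] at hm
        omega
    · exact Or.inl h
  · rintro (h | ⟨hp, _⟩)
    · exact Or.inr h
    · exact Or.inl hp

lemma Cls_disjoint {n : ℕ} (hn : 9 ≤ n) : Disjoint (Cls1 n) (Cls2 n) := by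
  rw [Finset.disjoint_left]
  intro f h1 h2
  obtain ⟨m, hm, hmle, -⟩ := (Finset.mem_filter.mp h1).2
  have := (Finset.mem_filter.mp h2).2.2 m hm
  omega

/-- for `n ≥ 9` the families `ℱ_i` with `0 ≤ i ≤ n−6` are independent
sets, and `ℱ_{n−9}` has size `C(n,4) + 42`. -/
theorem stmt_18 (n : ℕ) (hn : 9 ≤ n) :
    (∀ i, i ≤ n - 6 → Indep n (Fi n i)) ∧
      (Fi n (n - 9)).card = Nat.choose n 4 + 42 := by
  constructor
  · intro i _
    exact indep_Fi n (by omega) i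
  · have h1 : (Cls1 n).card + 126 = n.choose 4 := by
      rw [card_Cls1_aux hn]; exact card_T1 hn
    rw [Fi_eq_union hn, Finset.card_union_of_disjoint (Cls_disjoint hn), card_Cls2 hn]
    omega
end

section
/- Let n ≥ 9 and let ℱ be an independent set of flags of type {1,n−3} of [n] in which every (n−3)-set occurring as second component has ℱ-weight at most some w with (n−5)/2 ≤ w ≤ n−3. If (A',B') ∈ ℱ and B' has weight exactly w, then the number of flags (A,B) with A = {1}, 1 ∉ A' ∪ B', that are opposite to some flag of ℱ containing B' is at least C(n−3,3) − C(n−w−3,3). -/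
open Finset

/-- let `ℱ` be an independent set of flags of type `{1,n−3}` (`n ≥ 9`)
in which every `(n−3)`-set occurring as a second component has weight at most `w`,
where `(n−5)/2 ≤ w ≤ n−3`. If `(A',B') ∈ ℱ`, `B'` has weight exactly `w`, and
`1 ∉ A' ∪ B'`, then the number of flags `(A,B)` with `A = {1}` opposite to some
flag of `ℱ` containing `B'` is at least `C(n−3,3) − C(n−w−3,3)`. -/
theorem stmt_19 (n w : ℕ) (hn : 9 ≤ n)
    (hwlo : n - 5 ≤ 2 * w) (hwhi : w ≤ n - 3)
    (F : Finset (Finset ℕ × Finset ℕ)) (hflags : ∀ f ∈ F, IsFlag n 1 (n - 3) f)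
    (hindep : Indep n F)
    (hwall : ∀ f ∈ F, weightB F f.2 ≤ w)
    (A' B' : Finset ℕ) (hmem : (A', B') ∈ F) (hwB' : weightB F B' = w)
    (h1 : 1 ∉ A' ∪ B') :
    Nat.choose (n - 3) 3 - Nat.choose (n - w - 3) 3 ≤
      ((allFlags n 1 (n - 3)).filter
        (fun f => f.1 = {1} ∧ ∃ g ∈ F, g.2 = B' ∧ OppFlag n f g)).card := by
  classical
  have h1B' : (1:ℕ) ∉ B' := fun h => h1 (Finset.mem_union_right _ h)
  obtain ⟨hA'sub, hB'sub, hA'card, hB'card⟩ := hflags _ hmem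
  have hIvcard : (Iv n).card = n := by simp [Iv]
  have h1Iv : (1:ℕ) ∈ Iv n := by simp [Iv]; omega
  set W : Finset ℕ := B'.filter (fun x => ({x}, B') ∈ F) with hWdef
  have hWsub : W ⊆ B' := filter_subset _ _
  have hWcard : W.card = w := by
    rw [← hwB']
    unfold weightB
    apply Finset.card_bij (fun x _ => ({x}, B'))
    · intro x hx
      simp only [hWdef, mem_filter] at hx
      simp [hx.2]
    · intro a ha b hb hab
      have := congrArg Prod.fst hab
      simpa using this
    · intro f hf
      simp only [mem_filter] at hf
      obtain ⟨hfF, hf2⟩ := hf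
      obtain ⟨hsub, _, hc1, _⟩ := hflags _ hfF
      obtain ⟨x, hx⟩ := Finset.card_eq_one.1 hc1
      have hxB' : x ∈ B' := hf2 ▸ hsub (hx ▸ mem_singleton_self x)
      have hfx : f = ({x}, B') := by
        rw [Prod.ext_iff]; exact ⟨hx, hf2⟩
      refine ⟨x, ?_, hfx.symm⟩
      simp only [hWdef, mem_filter]
      exact ⟨hxB', hfx ▸ hfF⟩
  set D : Finset (Finset ℕ) :=
    (B'.powersetCard 3).filter (fun C => (C ∩ W).Nonempty) with hDdef
  have hDcard : D.card = Nat.choose (n - 3) 3 - Nat.choose (n - w - 3) 3 := by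
    have hneg : (B'.powersetCard 3).filter (fun C => ¬(C ∩ W).Nonempty)
        = (B' \ W).powersetCard 3 := by
      ext C
      simp only [mem_filter, mem_powersetCard, not_nonempty_iff_eq_empty,
        ← Finset.disjoint_iff_inter_eq_empty, Finset.subset_sdiff]
      tauto
    have hsplit := Finset.card_filter_add_card_filter_not
      (s := B'.powersetCard 3) (p := fun C => (C ∩ W).Nonempty)
    rw [hneg, Finset.card_powersetCard, Finset.card_powersetCard,
      Finset.card_sdiff_of_subset hWsub, hB'card, hWcard] at hsplit
    have : n - 3 - w = n - w - 3 := by omega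
    rw [this, ← hDdef] at hsplit
    omega
  rw [← hDcard]
  apply Finset.card_le_card_of_injOn (fun C => (({1} : Finset ℕ), Iv n \ C))
  · intro C hC
    simp only [hDdef, coe_filter, Set.mem_setOf_eq, mem_powersetCard] at hC
    obtain ⟨⟨hCB', hC3⟩, x, hx⟩ := hC
    rw [mem_inter] at hx
    have hCIv : C ⊆ Iv n := hCB'.trans hB'sub
    have h1C : (1:ℕ) ∉ C := fun h => h1B' (hCB' h)
    have h1mem : (1:ℕ) ∈ Iv n \ C := mem_sdiff.2 ⟨h1Iv, h1C⟩
    have hsd : (Iv n \ C).card = n - 3 := by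
      rw [Finset.card_sdiff_of_subset hCIv, hIvcard, hC3]
    have hxW : ({x}, B') ∈ F := (mem_filter.1 hx.2).2
    have hall : (({1} : Finset ℕ), Iv n \ C) ∈ allFlags n 1 (n - 3) := by
      unfold allFlags
      rw [mem_filter, Finset.mem_product, mem_powerset, mem_powerset]
      exact ⟨⟨singleton_subset_iff.2 h1Iv, sdiff_subset⟩,
        singleton_subset_iff.2 h1mem, sdiff_subset, card_singleton 1, hsd⟩
    have hunion : (Iv n \ C) ∪ B' = Iv n := by
      apply subset_antisymm
      · exact union_subset sdiff_subset hB'sub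
      · intro a ha
        by_cases h : a ∈ C
        · exact mem_union_right _ (hCB' h)
        · exact mem_union_left _ (mem_sdiff.2 ⟨ha, h⟩)
    have hint1 : ({1} : Finset ℕ) ∩ B' = ∅ :=
      Finset.singleton_inter_of_notMem h1B'
    have hint2 : ({x} : Finset ℕ) ∩ (Iv n \ C) = ∅ := by
      refine Finset.singleton_inter_of_notMem ?_
      simp only [mem_sdiff, not_and, not_not]
      intro _; exact hx.1
    rw [mem_coe, mem_filter]
    exact ⟨hall, rfl, ({x}, B'), hxW, rfl, hunion, hint1, hint2⟩
  · intro C1 hC1 C2 hC2 heq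
    simp only [hDdef, coe_filter, Set.mem_setOf_eq, mem_powersetCard] at hC1 hC2
    have h1 : C1 ⊆ Iv n := hC1.1.1.trans hB'sub
    have h2 : C2 ⊆ Iv n := hC2.1.1.trans hB'sub
    have := congrArg Prod.snd heq
    simp only at this
    calc C1 = Iv n \ (Iv n \ C1) := (Finset.sdiff_sdiff_eq_self h1).symm
      _ = Iv n \ (Iv n \ C2) := by rw [this]
      _ = C2 := Finset.sdiff_sdiff_eq_self h2
end
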